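/- arXiv:1407.6831 — 2 statements merged into one kernel-verified Lean document; each statement's English description precedes it below -/
import Mathlib

section
/- Fix 0 < p < 1 and θ > 0, and let ℓ(n) → ∞ satisfy n p^{ℓ(n)} q → θ as n → ∞. Then for every fixed r ≥ 1, E[C(G_{ℓ(n)}(n), r)] → θ^r / r!, and consequently P(G_{ℓ(n)}(n) = 0) = P(L(n) < ℓ(n)) → e^{-θ}. -/
open scoped Classical
open Finset Filter

noncomputable section

/-- Weight (probability) of a Boolean string of length `n` under i.i.d. Bernoulli(p). -/
def wt (p : ℝ) {n : ℕ} (x : Fin n → Bool) : ℝ :=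
  ∏ i, (if x i then p else 1 - p)

/-- Extend a finite string by `false`. -/
def pad {n : ℕ} (x : Fin n → Bool) : ℕ → Bool :=
  fun i => if h : i < n then x ⟨i, h⟩ else false

/-- A maximal run of 1's of length exactly `ℓ` starts at position `i` (0-indexed)
within the first `n` positions. -/
def IsRunAt (x : ℕ → Bool) (n i ℓ : ℕ) : Prop :=
  1 ≤ ℓ ∧ i + ℓ ≤ n ∧ (∀ k < ℓ, x (i + k) = true) ∧
    (i = 0 ∨ x (i - 1) = false) ∧ (i + ℓ = n ∨ x (i + ℓ) = false)

/-- `R_ℓ(n)`: the number of maximal runs of 1's of length exactly `ℓ` in the first `n` tosses. -/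
def runCount (x : ℕ → Bool) (n ℓ : ℕ) : ℕ :=
  ((Finset.range n).filter (fun i => IsRunAt x n i ℓ)).card

/-- `G_ℓ(n)`: the number of maximal runs of 1's of length at least `ℓ` in the first `n` tosses. -/
def excCount (x : ℕ → Bool) (n ℓ : ℕ) : ℕ :=
  ∑ k ∈ Finset.Icc ℓ n, runCount x n k

/-- `L(n)`: the length of the longest run of 1's in the first `n` tosses. -/
def longestRun (x : ℕ → Bool) (n : ℕ) : ℕ :=
  (Finset.range (n + 1)).sup
    (fun ℓ => if ∃ i, i + ℓ ≤ n ∧ ∀ k < ℓ, x (i + k) = true then ℓ else 0)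

/-- Expectation of a (real) functional of `n` i.i.d. Bernoulli(p) tosses. -/
def Ex (p : ℝ) (n : ℕ) (f : (ℕ → Bool) → ℝ) : ℝ :=
  ∑ x : Fin n → Bool, wt p x * f (pad x)

/-- Expectation of a complex functional of `n` i.i.d. Bernoulli(p) tosses. -/
def ExC (p : ℝ) (n : ℕ) (f : (ℕ → Bool) → ℂ) : ℂ :=
  ∑ x : Fin n → Bool, (wt p x : ℂ) * f (pad x)

/-- Probability of an event depending on the first `n` i.i.d. Bernoulli(p) tosses. -/
def Pr (p : ℝ) (n : ℕ) (A : Set (ℕ → Bool)) : ℝ :=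
  ∑ x : Fin n → Bool, if pad x ∈ A then wt p x else 0

/-- Binomial coefficient with integer upper argument, vanishing for negative upper argument. -/
def C (a : ℤ) (b : ℕ) : ℝ :=
  if a < 0 then 0 else (a.toNat).choose b

lemma cylinder (p : ℝ) {n : ℕ} (S : Finset ℕ) (hS : ∀ m ∈ S, m < n) (b : ℕ → Bool) :
    ∑ x : Fin n → Bool, wt p x * (if ∀ m ∈ S, pad x m = b m then 1 else 0)
      = ∏ m ∈ S, (if b m then p else 1 - p) := by
  have key : ∀ x : Fin n → Bool,
      wt p x * (if ∀ m ∈ S, pad x m = b m then 1 else 0)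
        = ∏ i : Fin n, ((if x i then p else 1 - p) * (if (↑i ∈ S ∧ x i ≠ b ↑i) then 0 else 1)) := by
    intro x
    rw [Finset.prod_mul_distrib]
    unfold wt
    congr 1
    by_cases h : ∀ m ∈ S, pad x m = b m
    · rw [if_pos h]
      refine (Finset.prod_eq_one fun i _ => ?_).symm
      rw [if_neg]
      rintro ⟨hi, hne⟩
      exact hne (by simpa [pad, i.isLt] using h i hi)
    · rw [if_neg h]
      push_neg at h
      obtain ⟨m, hm, hne⟩ := h
      have hmn : m < n := hS m hm
      refine (Finset.prod_eq_zero (Finset.mem_univ (⟨m, hmn⟩ : Fin n)) ?_).symm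
      rw [if_pos ⟨hm, by simpa [pad, hmn] using hne⟩]
  simp_rw [key]
  rw [← Fintype.piFinset_univ,
    ← Finset.prod_univ_sum (fun _ : Fin n => (Finset.univ : Finset Bool))
      (fun i c => (if c then p else 1 - p) * (if (↑i ∈ S ∧ c ≠ b ↑i) then 0 else 1))]
  have h2 : ∀ i : Fin n, (∑ c ∈ (Finset.univ : Finset Bool), ((if c then p else 1 - p) * (if (↑i ∈ S ∧ c ≠ b ↑i) then 0 else 1)))
      = if ↑i ∈ S then (if b ↑i then p else 1 - p) else 1 := by
    intro i
    by_cases hi : ↑i ∈ S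
    · cases hb : b ↑i <;> simp [hi, hb, Fintype.sum_bool]
    · simp [hi, Fintype.sum_bool]
  simp_rw [h2]
  rw [← Finset.prod_range (fun m => if m ∈ S then (if b m then p else 1 - p) else 1)]
  rw [Finset.prod_ite_mem]
  congr 1
  exact Finset.inter_eq_right.mpr fun m hm => Finset.mem_range.mpr (hS m hm)

lemma sum_wt (p : ℝ) (n : ℕ) : ∑ x : Fin n → Bool, wt p x = 1 := by
  have := cylinder p (n := n) ∅ (by simp) (fun _ => false)
  simpa using this

def Exc (x : ℕ → Bool) (n ℓ i : ℕ) : Prop :=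
  i + ℓ ≤ n ∧ (∀ k < ℓ, x (i + k) = true) ∧ (i = 0 ∨ x (i - 1) = false)

lemma exists_isRunAt {x : ℕ → Bool} {n ℓ i : ℕ} (hℓ : 1 ≤ ℓ) (h : Exc x n ℓ i) :
    ∃ k ∈ Finset.Icc ℓ n, IsRunAt x n i k := by
  obtain ⟨hin, htrue, hleft⟩ := h
  have hP : ∃ j, n ≤ i + j ∨ x (i + j) = false := ⟨n - i, Or.inl (by omega)⟩
  set k := Nat.find hP with hk
  have hPk := Nat.find_spec hP
  have hmin : ∀ j < k, ¬(n ≤ i + j ∨ x (i + j) = false) := fun j hj => Nat.find_min hP hj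
  have hkℓ : ℓ ≤ k := by
    rw [hk, Nat.le_find_iff]
    intro j hj
    push_neg
    exact ⟨by omega, by simpa using htrue j hj⟩
  have hkn : i + k ≤ n := by
    have : k ≤ n - i := Nat.find_le (Or.inl (by omega))
    omega
  rw [← hk] at hPk
  refine ⟨k, Finset.mem_Icc.mpr ⟨hkℓ, by omega⟩, by omega, hkn, ?_, hleft, ?_⟩
  · intro j hj
    have := hmin j hj
    push_neg at this
    simpa using this.2
  · rcases hPk with h1 | h2
    · exact Or.inl (by omega)
    · exact Or.inr h2

lemma isRunAt_ne {x : ℕ → Bool} {n i a b : ℕ} (ha : IsRunAt x n i a) (hb : IsRunAt x n i b)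
    (hab : a < b) : False := by
  obtain ⟨-, -, -, -, hend⟩ := ha
  obtain ⟨-, hbn, htr, -, -⟩ := hb
  have h1 : x (i + a) = true := htr a hab
  rcases hend with h | h
  · omega
  · rw [h1] at h; exact Bool.noConfusion h

lemma excCount_eq (x : ℕ → Bool) (n ℓ : ℕ) (hℓ : 1 ≤ ℓ) :
    excCount x n ℓ = ((Finset.range n).filter (fun i => Exc x n ℓ i)).card := by
  unfold excCount runCount
  rw [← Finset.card_biUnion]
  · congr 1
    ext i
    simp only [Finset.mem_biUnion, Finset.mem_filter, Finset.mem_Icc, Finset.mem_range]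
    constructor
    · rintro ⟨k, ⟨hk1, hk2⟩, hi, hrun⟩
      obtain ⟨h1, h2, h3, h4, h5⟩ := hrun
      exact ⟨hi, by omega, fun j hj => h3 j (by omega), h4⟩
    · rintro ⟨hi, hexc⟩
      obtain ⟨k, hk, hrun⟩ := exists_isRunAt hℓ hexc
      rw [Finset.mem_Icc] at hk
      exact ⟨k, hk, hi, hrun⟩
  · intro a _ b _ hab
    simp only [Finset.disjoint_left, Finset.mem_filter, Finset.mem_range]
    rintro i ⟨hi, hra⟩ ⟨_, hrb⟩
    rcases Nat.lt_or_ge a b with h | h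
    · exact isRunAt_ne hra hrb h
    · rcases Nat.lt_or_ge b a with h2 | h2
      · exact isRunAt_ne hrb hra h2
      · exact hab (by omega)

lemma le_longestRun_iff {x : ℕ → Bool} {n ℓ : ℕ} (hℓ : 1 ≤ ℓ) :
    ℓ ≤ longestRun x n ↔ ∃ i, i + ℓ ≤ n ∧ ∀ k < ℓ, x (i + k) = true := by
  unfold longestRun
  rw [Finset.le_sup_iff (show (⊥ : ℕ) < ℓ from hℓ)]
  constructor
  · rintro ⟨m, hm, hle⟩
    split at hle
    case isTrue h =>
      obtain ⟨i, hi, ht⟩ := h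
      exact ⟨i, by omega, fun k hk => ht k (by omega)⟩
    case isFalse => omega
  · rintro ⟨i, hi, ht⟩
    refine ⟨ℓ, Finset.mem_range.mpr (by omega), ?_⟩
    rw [if_pos ⟨i, hi, ht⟩]

lemma exc_of_run (x : ℕ → Bool) (n ℓ : ℕ) :
    ∀ i, i + ℓ ≤ n → (∀ k < ℓ, x (i + k) = true) → ∃ j, Exc x n ℓ j := by
  intro i
  induction i using Nat.strong_induction_on with
  | _ i IH =>
    intro hin ht
    by_cases h0 : i = 0 ∨ x (i - 1) = false
    · exact ⟨i, hin, ht, h0⟩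
    · push_neg at h0
      obtain ⟨h1, h2⟩ := h0
      apply IH (i - 1) (by omega) (by omega)
      intro k hk
      rcases Nat.eq_zero_or_pos k with rfl | hkpos
      · rw [Nat.add_zero]
        exact Bool.of_not_eq_false h2
      · have heq : i - 1 + k = i + (k - 1) := by omega
        rw [heq]
        exact ht (k - 1) (by omega)

lemma longestRun_lt_iff (x : ℕ → Bool) (n ℓ : ℕ) (hℓ : 1 ≤ ℓ) :
    longestRun x n < ℓ ↔ excCount x n ℓ = 0 := by
  rw [← not_le, le_longestRun_iff hℓ, excCount_eq x n ℓ hℓ, Finset.card_eq_zero]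
  constructor
  · intro h
    rw [Finset.filter_eq_empty_iff]
    rintro i - ⟨hin, ht, -⟩
    exact h ⟨i, hin, ht⟩
  · rintro h ⟨i, hin, ht⟩
    obtain ⟨j, hj⟩ := exc_of_run x n ℓ i hin ht
    have hjn : j < n := by
      obtain ⟨hjn, -, -⟩ := hj
      omega
    have : j ∈ (Finset.range n).filter (fun i => Exc x n ℓ i) :=
      Finset.mem_filter.mpr ⟨Finset.mem_range.mpr hjn, hj⟩
    rw [h] at this
    exact absurd this (Finset.notMem_empty j)

def Sepd (ℓ : ℕ) (T : Finset ℕ) : Prop := ∀ i ∈ T, ∀ j ∈ T, i < j → i + ℓ < j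

def bT (ℓ : ℕ) (T : Finset ℕ) : ℕ → Bool :=
  fun m => if ∃ i ∈ T, i ≤ m ∧ m < i + ℓ then true else false

def STT (ℓ : ℕ) (T : Finset ℕ) : Finset ℕ := T.biUnion (fun i => Finset.Ico (i - 1) (i + ℓ))

lemma bT_true {ℓ : ℕ} {T : Finset ℕ} {i k : ℕ} (hi : i ∈ T) (hk : k < ℓ) :
    bT ℓ T (i + k) = true := by
  unfold bT
  rw [if_pos ⟨i, hi, Nat.le_add_right _ _, by omega⟩]

lemma bT_false {ℓ : ℕ} {T : Finset ℕ} {i : ℕ} (hSep : Sepd ℓ T) (hi : i ∈ T) (h1 : 1 ≤ i) :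
    bT ℓ T (i - 1) = false := by
  unfold bT
  rw [if_neg]
  rintro ⟨i', hi', hle, hlt⟩
  rcases lt_trichotomy i' i with h | h | h
  · have := hSep i' hi' i hi h
    omega
  · omega
  · omega

lemma event_iff {ℓ n : ℕ} {T : Finset ℕ} (hSep : Sepd ℓ T) (hsub : ∀ i ∈ T, i + ℓ ≤ n)
    (x : ℕ → Bool) :
    (∀ i ∈ T, Exc x n ℓ i) ↔ (∀ m ∈ STT ℓ T, x m = bT ℓ T m) := by
  constructor
  · intro h m hm
    rw [STT, Finset.mem_biUnion] at hm
    obtain ⟨i, hi, hmi⟩ := hm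
    rw [Finset.mem_Ico] at hmi
    rcases Nat.lt_or_ge m i with hlt | hge
    · have h1 : 1 ≤ i := by omega
      have hm1 : m = i - 1 := by omega
      rw [hm1, bT_false hSep hi h1]
      rcases (h i hi).2.2 with h0 | h0
      · omega
      · exact h0
    · have hk : m - i < ℓ := by omega
      have : m = i + (m - i) := by omega
      rw [this, bT_true hi hk]
      exact (h i hi).2.1 (m - i) hk
  · intro h i hi
    refine ⟨hsub i hi, ?_, ?_⟩
    · intro k hk
      have hmem : i + k ∈ STT ℓ T := by
        rw [STT, Finset.mem_biUnion]
        exact ⟨i, hi, Finset.mem_Ico.mpr ⟨by omega, by omega⟩⟩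
      rw [h _ hmem, bT_true hi hk]
    · rcases Nat.eq_zero_or_pos i with h0 | h0
      · exact Or.inl h0
      · refine Or.inr ?_
        have hmem : i - 1 ∈ STT ℓ T := by
          rw [STT, Finset.mem_biUnion]
          exact ⟨i, hi, Finset.mem_Ico.mpr ⟨le_refl _, by omega⟩⟩
        rw [h _ hmem, bT_false hSep hi h0]

lemma prod_ST (p : ℝ) {ℓ r : ℕ} {T : Finset ℕ} (hℓ : 1 ≤ ℓ) (hSep : Sepd ℓ T)
    (hcard : T.card = r) :
    ∏ m ∈ STT ℓ T, (if bT ℓ T m then p else 1 - p)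
      = p ^ (ℓ * r) * (if 0 ∈ T then (1 - p) ^ (r - 1) else (1 - p) ^ r) := by
  classical
  set Strue := T.biUnion (fun i => Finset.Ico i (i + ℓ)) with hStrue
  set Sfalse := (T.filter (fun i => 1 ≤ i)).image (fun i => i - 1) with hSfalse
  have htrue : ∀ m ∈ Strue, bT ℓ T m = true := by
    intro m hm
    rw [hStrue, Finset.mem_biUnion] at hm
    obtain ⟨i, hi, hmi⟩ := hm
    rw [Finset.mem_Ico] at hmi
    have : m = i + (m - i) := by omega
    rw [this]
    exact bT_true hi (by omega)
  have hfalse : ∀ m ∈ Sfalse, bT ℓ T m = false := by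
    intro m hm
    rw [hSfalse, Finset.mem_image] at hm
    obtain ⟨i, hi, rfl⟩ := hm
    rw [Finset.mem_filter] at hi
    exact bT_false hSep hi.1 hi.2
  have hunion : STT ℓ T = Strue ∪ Sfalse := by
    ext m
    rw [STT, Finset.mem_biUnion, Finset.mem_union]
    constructor
    · rintro ⟨i, hi, hmi⟩
      rw [Finset.mem_Ico] at hmi
      rcases Nat.lt_or_ge m i with hlt | hge
      · refine Or.inr ?_
        rw [hSfalse, Finset.mem_image]
        exact ⟨i, Finset.mem_filter.mpr ⟨hi, by omega⟩, by omega⟩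
      · refine Or.inl ?_
        rw [hStrue, Finset.mem_biUnion]
        exact ⟨i, hi, Finset.mem_Ico.mpr ⟨hge, hmi.2⟩⟩
    · rintro (hm | hm)
      · rw [hStrue, Finset.mem_biUnion] at hm
        obtain ⟨i, hi, hmi⟩ := hm
        rw [Finset.mem_Ico] at hmi
        exact ⟨i, hi, Finset.mem_Ico.mpr ⟨by omega, hmi.2⟩⟩
      · rw [hSfalse, Finset.mem_image] at hm
        obtain ⟨i, hi, rfl⟩ := hm
        rw [Finset.mem_filter] at hi
        exact ⟨i, hi.1, Finset.mem_Ico.mpr ⟨le_refl _, by omega⟩⟩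
  have hdisj : Disjoint Strue Sfalse := by
    rw [Finset.disjoint_left]
    intro m hm1 hm2
    have := htrue m hm1
    rw [hfalse m hm2] at this
    exact Bool.noConfusion this
  have hcard_true : Strue.card = ℓ * r := by
    rw [hStrue, Finset.card_biUnion]
    · rw [Finset.sum_congr rfl (fun i _ => Nat.card_Ico i (i + ℓ)), Finset.sum_congr rfl
        (fun i _ => by omega : ∀ i ∈ T, i + ℓ - i = ℓ), Finset.sum_const, hcard]
      rw [smul_eq_mul, Nat.mul_comm]
    · intro a ha b hb hab
      rw [Function.onFun, Finset.disjoint_left]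
      intro m hm1 hm2
      rw [Finset.mem_Ico] at hm1 hm2
      rcases Nat.lt_or_ge a b with h | h
      · have := hSep a ha b hb h
        omega
      · have hba : b < a := by omega
        have := hSep b hb a ha hba
        omega
  have hcard_false : Sfalse.card = (T.filter (fun i => 1 ≤ i)).card := by
    rw [hSfalse]
    apply Finset.card_image_of_injOn
    intro a ha b hb hab
    rw [Finset.mem_coe, Finset.mem_filter] at ha hb
    have hab' : a - 1 = b - 1 := hab
    omega
  have hcard_filter : (T.filter (fun i => 1 ≤ i)).card = if 0 ∈ T then r - 1 else r := by
    by_cases h0 : 0 ∈ T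
    · rw [if_pos h0]
      have : T.filter (fun i => 1 ≤ i) = T.erase 0 := by
        ext i
        rw [Finset.mem_filter, Finset.mem_erase]
        constructor
        · rintro ⟨h1, h2⟩; exact ⟨by omega, h1⟩
        · rintro ⟨h1, h2⟩; exact ⟨h2, by omega⟩
      rw [this, Finset.card_erase_of_mem h0, hcard]
    · rw [if_neg h0]
      have : T.filter (fun i => 1 ≤ i) = T := by
        apply Finset.filter_eq_self.mpr
        intro i hi
        rcases Nat.eq_zero_or_pos i with rfl | h
        · exact absurd hi h0
        · exact h
      rw [this, hcard]
  have h1 : ∏ m ∈ Strue, (if bT ℓ T m then p else 1 - p) = p ^ Strue.card := by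
    rw [← Finset.prod_const]
    refine Finset.prod_congr rfl fun m hm => ?_
    rw [htrue m hm]
    simp
  have h2 : ∏ m ∈ Sfalse, (if bT ℓ T m then p else 1 - p) = (1 - p) ^ Sfalse.card := by
    rw [← Finset.prod_const]
    refine Finset.prod_congr rfl fun m hm => ?_
    rw [hfalse m hm]
    simp
  rw [hunion, Finset.prod_union hdisj, h1, h2, hcard_true, hcard_false, hcard_filter]
  by_cases h0 : 0 ∈ T <;> simp [h0]

def GoodF (n ℓ r : ℕ) : Finset (Finset ℕ) :=
  ((Finset.range n).powersetCard r).filter (fun T => (∀ i ∈ T, i + ℓ ≤ n) ∧ Sepd ℓ T)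

lemma not_event_of_bad {n ℓ : ℕ} {T : Finset ℕ}
    (hbad : ¬((∀ i ∈ T, i + ℓ ≤ n) ∧ Sepd ℓ T)) (y : ℕ → Bool) :
    ¬(∀ i ∈ T, Exc y n ℓ i) := by
  intro hall
  apply hbad
  constructor
  · exact fun i hi => (hall i hi).1
  · intro i hi j hj hij
    by_contra hle
    have h1 : y (i + (j - 1 - i)) = true := (hall i hi).2.1 (j - 1 - i) (by omega)
    have heq : i + (j - 1 - i) = j - 1 := by omega
    rcases (hall j hj).2.2 with h0 | h0
    · omega
    · rw [heq, h0] at h1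
      exact Bool.noConfusion h1

lemma choose_eq_sum {n ℓ r : ℕ} (hℓ : 1 ≤ ℓ) (y : ℕ → Bool) :
    ((excCount y n ℓ).choose r : ℝ)
      = ∑ T ∈ (Finset.range n).powersetCard r,
          (if ∀ i ∈ T, Exc y n ℓ i then (1 : ℝ) else 0) := by
  rw [excCount_eq y n ℓ hℓ]
  set S := (Finset.range n).filter (fun i => Exc y n ℓ i) with hSdef
  have hS : S ⊆ Finset.range n := Finset.filter_subset _ _
  rw [← Finset.card_powersetCard]
  have hps : S.powersetCard r
      = ((Finset.range n).powersetCard r).filter (fun T => ∀ i ∈ T, Exc y n ℓ i) := by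
    ext T
    simp only [Finset.mem_powersetCard, Finset.mem_filter]
    constructor
    · rintro ⟨hTS, hcard⟩
      exact ⟨⟨hTS.trans hS, hcard⟩, fun i hi => (Finset.mem_filter.mp (hTS hi)).2⟩
    · rintro ⟨⟨hTr, hcard⟩, hexc⟩
      exact ⟨fun i hi => Finset.mem_filter.mpr ⟨hTr hi, hexc i hi⟩, hcard⟩
  rw [hps, Finset.card_filter]
  push_cast
  rfl

lemma Ex_choose (p : ℝ) (n ℓ r : ℕ) (hℓ : 1 ≤ ℓ) :
    Ex p n (fun x => ((excCount x n ℓ).choose r : ℝ))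
      = ∑ T ∈ GoodF n ℓ r,
          p ^ (ℓ * r) * (if 0 ∈ T then (1 - p) ^ (r - 1) else (1 - p) ^ r) := by
  unfold Ex
  have step1 : ∀ x : Fin n → Bool,
      wt p x * ((excCount (pad x) n ℓ).choose r : ℝ)
        = ∑ T ∈ (Finset.range n).powersetCard r,
            wt p x * (if ∀ i ∈ T, Exc (pad x) n ℓ i then (1 : ℝ) else 0) := by
    intro x
    rw [choose_eq_sum hℓ, Finset.mul_sum]
  simp_rw [step1]
  rw [Finset.sum_comm]
  rw [← Finset.sum_filter_add_sum_filter_not ((Finset.range n).powersetCard r)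
    (fun T => (∀ i ∈ T, i + ℓ ≤ n) ∧ Sepd ℓ T)]
  have hzero : ∑ T ∈ ((Finset.range n).powersetCard r).filter
      (fun T => ¬((∀ i ∈ T, i + ℓ ≤ n) ∧ Sepd ℓ T)),
      ∑ x : Fin n → Bool, wt p x * (if ∀ i ∈ T, Exc (pad x) n ℓ i then (1 : ℝ) else 0) = 0 := by
    apply Finset.sum_eq_zero
    intro T hT
    rw [Finset.mem_filter] at hT
    apply Finset.sum_eq_zero
    intro x _
    rw [if_neg (not_event_of_bad hT.2 (pad x)), mul_zero]
  rw [hzero, add_zero]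
  apply Finset.sum_congr rfl
  intro T hT
  unfold GoodF at hT
  rw [Finset.mem_filter, Finset.mem_powersetCard] at hT
  obtain ⟨⟨hTr, hcard⟩, hsub, hsep⟩ := hT
  have hSTsub : ∀ m ∈ STT ℓ T, m < n := by
    intro m hm
    rw [STT, Finset.mem_biUnion] at hm
    obtain ⟨i, hi, hmi⟩ := hm
    rw [Finset.mem_Ico] at hmi
    have := hsub i hi
    omega
  have heq : ∀ x : Fin n → Bool,
      (if ∀ i ∈ T, Exc (pad x) n ℓ i then (1 : ℝ) else 0)
        = (if ∀ m ∈ STT ℓ T, pad x m = bT ℓ T m then (1 : ℝ) else 0) := by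
    intro x
    exact if_congr (event_iff hsep hsub (pad x)) rfl rfl
  simp_rw [heq]
  rw [cylinder p (STT ℓ T) hSTsub (bT ℓ T)]
  exact prod_ST p hℓ hsep hcard

lemma goodF_card_le (n ℓ r : ℕ) : (GoodF n ℓ r).card ≤ n.choose r := by
  calc (GoodF n ℓ r).card ≤ ((Finset.range n).powersetCard r).card :=
        Finset.card_le_card (Finset.filter_subset _ _)
    _ = n.choose r := by rw [Finset.card_powersetCard, Finset.card_range]

lemma goodF_zero_card_le (n ℓ r : ℕ) (hr : 1 ≤ r) :
    ((GoodF n ℓ r).filter (fun T => 0 ∈ T)).card ≤ n.choose (r - 1) := by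
  have : ((Finset.range n).powersetCard (r - 1)).card = n.choose (r - 1) := by
    rw [Finset.card_powersetCard, Finset.card_range]
  rw [← this]
  apply Finset.card_le_card_of_injOn (fun T => T.erase 0)
  · intro T hT
    rw [Finset.mem_coe, Finset.mem_filter] at hT
    obtain ⟨hT1, h0⟩ := hT
    unfold GoodF at hT1
    rw [Finset.mem_filter, Finset.mem_powersetCard] at hT1
    rw [Finset.mem_coe, Finset.mem_powersetCard]
    exact ⟨(Finset.erase_subset 0 T).trans hT1.1.1,
      by rw [Finset.card_erase_of_mem h0, hT1.1.2]⟩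
  · intro T1 h1 T2 h2 h12
    rw [Finset.mem_coe, Finset.mem_filter] at h1 h2
    rw [← Finset.insert_erase h1.2, ← Finset.insert_erase h2.2]
    simp only at h12
    rw [h12]

lemma le_goodF_card (n ℓ r : ℕ) (hℓ : 1 ≤ ℓ) :
    (n + 1 - ℓ * r).choose r ≤ (GoodF n ℓ r).card := by
  classical
  set M := n + 1 - ℓ * r with hM
  have hcardM : ((Finset.range M).powersetCard r).card = M.choose r := by
    rw [Finset.card_powersetCard, Finset.card_range]
  rw [← hcardM]
  set φ : Finset ℕ → Finset ℕ := fun T =>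
    if h : T.card = r then Finset.image (fun j : Fin r => T.orderEmbOfFin h j + ℓ * j) Finset.univ
    else ∅ with hφ
  apply Finset.card_le_card_of_injOn φ
  · intro T hT
    rw [Finset.mem_coe, Finset.mem_powersetCard] at hT
    obtain ⟨hTsub, hTcard⟩ := hT
    have hmono : StrictMono (fun j : Fin r => T.orderEmbOfFin hTcard j + ℓ * j) := by
      intro a b hab
      have h1 := (T.orderEmbOfFin hTcard).strictMono hab
      have h2 : (a : ℕ) < (b : ℕ) := hab
      simp only
      have : ℓ * (a:ℕ) ≤ ℓ * (b:ℕ) := Nat.mul_le_mul_left ℓ (le_of_lt h2)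
      omega
    have hmem : ∀ j : Fin r, T.orderEmbOfFin hTcard j + ℓ * j + ℓ ≤ n := by
      intro j
      have h1 : T.orderEmbOfFin hTcard j ∈ T := Finset.orderEmbOfFin_mem T hTcard j
      have h2 : T.orderEmbOfFin hTcard j < M := Finset.mem_range.mp (hTsub h1)
      have h3 : (j : ℕ) ≤ r - 1 := by omega
      have h4 : ℓ * (j : ℕ) ≤ ℓ * (r - 1) := Nat.mul_le_mul_left ℓ h3
      have h5 : ℓ * (r - 1) + ℓ = ℓ * r := by
        have : 1 ≤ r := by
          rcases Nat.eq_zero_or_pos r with rfl | h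
          · exact absurd j.isLt (by omega)
          · exact h
        calc ℓ * (r - 1) + ℓ = ℓ * (r - 1 + 1) := by ring
          _ = ℓ * r := by rw [Nat.sub_add_cancel this]
      omega
    rw [hφ]
    simp only [dif_pos hTcard]
    set F : Fin r → ℕ := fun j => T.orderEmbOfFin hTcard j + ℓ * j with hFdef
    have hFval : ∀ j : Fin r, F j = T.orderEmbOfFin hTcard j + ℓ * j := fun j => rfl
    unfold GoodF
    rw [Finset.mem_coe, Finset.mem_filter, Finset.mem_powersetCard]
    refine ⟨⟨?_, ?_⟩, ?_, ?_⟩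
    · intro u hu
      rw [Finset.mem_image] at hu
      obtain ⟨j, -, rfl⟩ := hu
      have := hmem j
      rw [Finset.mem_range, hFval j]
      omega
    · rw [Finset.card_image_of_injective _ hmono.injective, Finset.card_univ, Fintype.card_fin]
    · intro u hu
      rw [Finset.mem_image] at hu
      obtain ⟨j, -, rfl⟩ := hu
      rw [hFval j]
      exact hmem j
    · intro u hu v hv huv
      rw [Finset.mem_image] at hu hv
      obtain ⟨a, -, rfl⟩ := hu
      obtain ⟨b, -, rfl⟩ := hv
      have hab : a < b := by
        by_contra hab
        push_neg at hab
        rcases eq_or_lt_of_le hab with h | h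
        · rw [h] at huv; exact lt_irrefl _ huv
        · exact absurd (hmono h) (not_lt.mpr (le_of_lt huv))
      have h1 := (T.orderEmbOfFin hTcard).strictMono hab
      have h2 : (a : ℕ) + 1 ≤ (b : ℕ) := hab
      have h4 : ℓ * ((a:ℕ) + 1) ≤ ℓ * (b:ℕ) := Nat.mul_le_mul_left ℓ h2
      have h3 : ℓ * ((a:ℕ)+1) = ℓ * a + ℓ := by ring
      rw [hFval a, hFval b]
      omega
  · intro T1 h1 T2 h2 h12
    rw [Finset.mem_coe, Finset.mem_powersetCard] at h1 h2
    obtain ⟨hs1, hc1⟩ := h1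
    obtain ⟨hs2, hc2⟩ := h2
    rw [hφ] at h12
    simp only [dif_pos hc1, dif_pos hc2] at h12
    set F1 : Fin r → ℕ := fun j => T1.orderEmbOfFin hc1 j + ℓ * j with hF1
    set F2 : Fin r → ℕ := fun j => T2.orderEmbOfFin hc2 j + ℓ * j with hF2
    have hmono1 : StrictMono F1 := by
      intro a b hab
      have h1 := (T1.orderEmbOfFin hc1).strictMono hab
      have : ℓ * (a:ℕ) ≤ ℓ * (b:ℕ) := Nat.mul_le_mul_left ℓ (le_of_lt (show (a:ℕ) < b from hab))
      simp only [hF1]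
      omega
    have hmono2 : StrictMono F2 := by
      intro a b hab
      have h1 := (T2.orderEmbOfFin hc2).strictMono hab
      have : ℓ * (a:ℕ) ≤ ℓ * (b:ℕ) := Nat.mul_le_mul_left ℓ (le_of_lt (show (a:ℕ) < b from hab))
      simp only [hF2]
      omega
    set S := Finset.image F1 Finset.univ with hS
    have hcS : S.card = r := by
      rw [hS, Finset.card_image_of_injective _ hmono1.injective, Finset.card_univ,
        Fintype.card_fin]
    have hu1 : F1 = S.orderEmbOfFin hcS :=
      Finset.orderEmbOfFin_unique hcS (fun j => Finset.mem_image_of_mem _ (Finset.mem_univ j))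
        hmono1
    have hu2 : F2 = S.orderEmbOfFin hcS := by
      apply Finset.orderEmbOfFin_unique hcS _ hmono2
      intro j
      have hj : F2 j ∈ Finset.image F2 Finset.univ :=
        Finset.mem_image_of_mem _ (Finset.mem_univ j)
      rw [← h12] at hj
      exact hj
    have hFeq : ∀ j : Fin r, F1 j = F2 j := by
      intro j
      rw [hu1, hu2]
    have heq : ∀ j : Fin r, T1.orderEmbOfFin hc1 j = T2.orderEmbOfFin hc2 j := by
      intro j
      have := hFeq j
      simp only [hF1, hF2] at this
      omega
    apply Finset.coe_injective
    rw [← Finset.range_orderEmbOfFin T1 hc1, ← Finset.range_orderEmbOfFin T2 hc2]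
    have : ⇑(T1.orderEmbOfFin hc1) = ⇑(T2.orderEmbOfFin hc2) := funext heq
    rw [this]

lemma Ex_lower (p : ℝ) (hp0 : 0 ≤ p) (hp1 : p ≤ 1) (n ℓ r : ℕ) (hℓ : 1 ≤ ℓ) :
    (p ^ ℓ * (1 - p)) ^ r * ((n + 1 - ℓ * r).choose r : ℝ)
      ≤ Ex p n (fun x => ((excCount x n ℓ).choose r : ℝ)) := by
  rw [Ex_choose p n ℓ r hℓ]
  have hq0 : (0:ℝ) ≤ 1 - p := by linarith
  have hq1 : 1 - p ≤ 1 := by linarith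
  have hterm : ∀ T ∈ GoodF n ℓ r,
      p ^ (ℓ * r) * (1 - p) ^ r
        ≤ p ^ (ℓ * r) * (if 0 ∈ T then (1 - p) ^ (r - 1) else (1 - p) ^ r) := by
    intro T _
    apply mul_le_mul_of_nonneg_left _ (pow_nonneg hp0 _)
    by_cases h0 : 0 ∈ T
    · rw [if_pos h0]
      exact pow_le_pow_of_le_one hq0 hq1 (by omega)
    · rw [if_neg h0]
  calc (p ^ ℓ * (1 - p)) ^ r * ((n + 1 - ℓ * r).choose r : ℝ)
      ≤ (p ^ ℓ * (1 - p)) ^ r * ((GoodF n ℓ r).card : ℝ) := by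
        apply mul_le_mul_of_nonneg_left _ (pow_nonneg (by positivity) _)
        exact_mod_cast le_goodF_card n ℓ r hℓ
    _ = ∑ _T ∈ GoodF n ℓ r, p ^ (ℓ * r) * (1 - p) ^ r := by
        rw [Finset.sum_const, mul_pow, ← pow_mul, nsmul_eq_mul]
        ring
    _ ≤ _ := Finset.sum_le_sum hterm

lemma Ex_upper (p : ℝ) (hp0 : 0 ≤ p) (hp1 : p ≤ 1) (n ℓ r : ℕ) (hℓ : 1 ≤ ℓ) (hr : 1 ≤ r) :
    Ex p n (fun x => ((excCount x n ℓ).choose r : ℝ))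
      ≤ (p ^ ℓ * (1 - p)) ^ r * (n.choose r : ℝ)
        + p ^ (ℓ * r) * (1 - p) ^ (r - 1) * (n.choose (r - 1) : ℝ) := by
  rw [Ex_choose p n ℓ r hℓ]
  have hq0 : (0:ℝ) ≤ 1 - p := by linarith
  have hterm : ∀ T ∈ GoodF n ℓ r,
      p ^ (ℓ * r) * (if 0 ∈ T then (1 - p) ^ (r - 1) else (1 - p) ^ r)
        ≤ p ^ (ℓ * r) * (1 - p) ^ r
          + (if 0 ∈ T then p ^ (ℓ * r) * (1 - p) ^ (r - 1) else 0) := by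
    intro T _
    by_cases h0 : 0 ∈ T
    · rw [if_pos h0, if_pos h0]
      have : (0:ℝ) ≤ p ^ (ℓ * r) * (1 - p) ^ r := by positivity
      linarith
    · rw [if_neg h0, if_neg h0, add_zero]
  calc ∑ T ∈ GoodF n ℓ r, p ^ (ℓ * r) * (if 0 ∈ T then (1 - p) ^ (r - 1) else (1 - p) ^ r)
      ≤ ∑ T ∈ GoodF n ℓ r, (p ^ (ℓ * r) * (1 - p) ^ r
          + (if 0 ∈ T then p ^ (ℓ * r) * (1 - p) ^ (r - 1) else 0)) := Finset.sum_le_sum hterm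
    _ = ((GoodF n ℓ r).card : ℝ) * (p ^ (ℓ * r) * (1 - p) ^ r)
        + (((GoodF n ℓ r).filter (fun T => 0 ∈ T)).card : ℝ)
          * (p ^ (ℓ * r) * (1 - p) ^ (r - 1)) := by
        rw [Finset.sum_add_distrib, Finset.sum_const, ← Finset.sum_filter, Finset.sum_const,
          nsmul_eq_mul, nsmul_eq_mul]
    _ ≤ _ := by
        have h1 : ((GoodF n ℓ r).card : ℝ) ≤ (n.choose r : ℝ) := by
          exact_mod_cast goodF_card_le n ℓ r
        have h2 : (((GoodF n ℓ r).filter (fun T => 0 ∈ T)).card : ℝ) ≤ (n.choose (r-1) : ℝ) := by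
          exact_mod_cast goodF_zero_card_le n ℓ r hr
        have hc1 : (0:ℝ) ≤ p ^ (ℓ * r) * (1 - p) ^ r := by positivity
        have hc2 : (0:ℝ) ≤ p ^ (ℓ * r) * (1 - p) ^ (r - 1) := by positivity
        have e1 : (p ^ ℓ * (1 - p)) ^ r = p ^ (ℓ * r) * (1 - p) ^ r := by
          rw [mul_pow, ← pow_mul]
        rw [e1]
        have := add_le_add (mul_le_mul_of_nonneg_right h1 hc1) (mul_le_mul_of_nonneg_right h2 hc2)
        calc ((GoodF n ℓ r).card : ℝ) * (p ^ (ℓ * r) * (1 - p) ^ r)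
              + (((GoodF n ℓ r).filter (fun T => 0 ∈ T)).card : ℝ)
                * (p ^ (ℓ * r) * (1 - p) ^ (r - 1))
            ≤ (n.choose r : ℝ) * (p ^ (ℓ * r) * (1 - p) ^ r)
              + (n.choose (r-1) : ℝ) * (p ^ (ℓ * r) * (1 - p) ^ (r - 1)) := this
          _ = _ := by ring

lemma ratio_atTop {t w : ℕ → ℝ} {θ : ℝ} (hθ : 0 < θ) (ht0 : ∀ n, 0 < t n)
    (h : Filter.Tendsto (fun n => w n * t n) Filter.atTop (nhds θ))
    (ht : Filter.Tendsto t Filter.atTop (nhds 0)) :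
    Filter.Tendsto w Filter.atTop Filter.atTop := by
  have ht' : Filter.Tendsto t Filter.atTop (nhdsWithin 0 (Set.Ioi 0)) := by
    rw [tendsto_nhdsWithin_iff]
    exact ⟨ht, Filter.Eventually.of_forall fun n => ht0 n⟩
  have hinv : Filter.Tendsto (fun n => (t n)⁻¹) Filter.atTop Filter.atTop :=
    tendsto_inv_nhdsGT_zero.comp ht'
  have hconst : Filter.Tendsto (fun n => (θ / 2) * (t n)⁻¹) Filter.atTop Filter.atTop :=
    hinv.const_mul_atTop (by linarith)
  apply Filter.tendsto_atTop_mono' _ _ hconst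
  have hev : ∀ᶠ n in Filter.atTop, θ / 2 < w n * t n :=
    h.eventually (eventually_gt_nhds (by linarith))
  filter_upwards [hev] with n hn
  rw [mul_inv_le_iff₀ (ht0 n)]
  linarith

lemma lim_choose {t : ℕ → ℝ} {u : ℕ → ℕ} {θ : ℝ} (hθ : 0 < θ) (ht0 : ∀ n, 0 < t n)
    (ht : Filter.Tendsto t Filter.atTop (nhds 0))
    (h : Filter.Tendsto (fun n => (u n : ℝ) * t n) Filter.atTop (nhds θ)) (r : ℕ) :
    Filter.Tendsto (fun n => t n ^ r * ((u n).choose r : ℝ)) Filter.atTop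
      (nhds (θ ^ r / r.factorial)) := by
  have hu : Filter.Tendsto (fun n => (u n : ℝ)) Filter.atTop Filter.atTop :=
    ratio_atTop hθ ht0 h ht
  have hur : ∀ᶠ n in Filter.atTop, r ≤ u n := by
    filter_upwards [hu.eventually_ge_atTop (r : ℝ)] with n hn
    exact_mod_cast hn
  set F : ℕ → ℝ := fun n => (∏ j ∈ Finset.range r, (((u n : ℝ) - j) * t n)) / r.factorial
    with hF
  have hFeq : ∀ᶠ n in Filter.atTop, t n ^ r * ((u n).choose r : ℝ) = F n := by
    filter_upwards [hur] with n hn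
    have hcast : ((u n).choose r : ℝ) = (∏ j ∈ Finset.range r, ((u n : ℝ) - j)) / r.factorial := by
      rw [Nat.choose_eq_descFactorial_div_factorial,
        Nat.cast_div (Nat.factorial_dvd_descFactorial _ _)
          (by exact_mod_cast Nat.factorial_ne_zero r),
        Nat.descFactorial_eq_prod_range, Nat.cast_prod]
      congr 1
      refine Finset.prod_congr rfl fun j hj => ?_
      rw [Finset.mem_range] at hj
      rw [Nat.cast_sub (by omega)]
    rw [hcast, hF]
    simp only
    rw [Finset.prod_mul_distrib, Finset.prod_const, Finset.card_range]
    ring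
  have hprod : Filter.Tendsto (fun n => ∏ j ∈ Finset.range r, (((u n : ℝ) - j) * t n))
      Filter.atTop (nhds (∏ _j ∈ Finset.range r, θ)) := by
    apply tendsto_finset_prod
    intro j _
    have h1 : Filter.Tendsto (fun n => (u n : ℝ) * t n - (j : ℝ) * t n) Filter.atTop
        (nhds (θ - (j : ℝ) * 0)) := h.sub (ht.const_mul (j : ℝ))
    rw [mul_zero, sub_zero] at h1
    apply h1.congr
    intro n
    ring
  have hlim : Filter.Tendsto F Filter.atTop (nhds (θ ^ r / r.factorial)) := by
    rw [hF]
    have : (∏ _j ∈ Finset.range r, θ) = θ ^ r := by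
      rw [Finset.prod_const, Finset.card_range]
    exact this ▸ hprod.div_const _
  exact Filter.Tendsto.congr' (Filter.EventuallyEq.symm hFeq) hlim

lemma wt_nonneg {p : ℝ} (hp0 : 0 ≤ p) (hp1 : p ≤ 1) {n : ℕ} (x : Fin n → Bool) :
    0 ≤ wt p x := by
  apply Finset.prod_nonneg
  intro i _
  by_cases h : x i <;> simp [h] <;> linarith

lemma Ex_mono {p : ℝ} (hp0 : 0 ≤ p) (hp1 : p ≤ 1) {n : ℕ} {f g : (ℕ → Bool) → ℝ}
    (h : ∀ y, f y ≤ g y) : Ex p n f ≤ Ex p n g := by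
  apply Finset.sum_le_sum
  intro x _
  exact mul_le_mul_of_nonneg_left (h (pad x)) (wt_nonneg hp0 hp1 x)

lemma Ex_sum {p : ℝ} {n : ℕ} {ι : Type*} (s : Finset ι) (f : ι → (ℕ → Bool) → ℝ) :
    Ex p n (fun x => ∑ i ∈ s, f i x) = ∑ i ∈ s, Ex p n (f i) := by
  unfold Ex
  simp_rw [Finset.mul_sum]
  rw [Finset.sum_comm]

lemma Ex_const_mul {p : ℝ} {n : ℕ} (c : ℝ) (f : (ℕ → Bool) → ℝ) :
    Ex p n (fun x => c * f x) = c * Ex p n f := by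
  unfold Ex
  rw [Finset.mul_sum]
  apply Finset.sum_congr rfl
  intro x _
  ring

lemma Ex_one {p : ℝ} {n : ℕ} : Ex p n (fun _ => (1:ℝ)) = 1 := by
  unfold Ex
  simp_rw [mul_one]
  exact sum_wt p n

lemma alt_sum (g s : ℕ) (hg : 1 ≤ g) :
    ∑ r ∈ Finset.range (s + 1), (-1:ℝ) ^ r * (g.choose r : ℝ)
      = (-1) ^ s * ((g - 1).choose s : ℝ) := by
  induction s with
  | zero => simp
  | succ s ih =>
    rw [Finset.sum_range_succ, ih]
    have hch : (g.choose (s + 1) : ℝ) = ((g-1).choose s : ℝ) + ((g-1).choose (s+1) : ℝ) := by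
      have hg' : g = (g - 1) + 1 := by omega
      rw [hg', Nat.choose_succ_succ]
      push_cast
      simp [hg'.symm]
    rw [hch]
    ring

lemma bonferroni {g s : ℕ} :
    (Even s → (if g = 0 then (1:ℝ) else 0)
        ≤ ∑ r ∈ Finset.range (s + 1), (-1:ℝ) ^ r * (g.choose r : ℝ))
    ∧ (Odd s → ∑ r ∈ Finset.range (s + 1), (-1:ℝ) ^ r * (g.choose r : ℝ)
        ≤ (if g = 0 then (1:ℝ) else 0)) := by
  rcases Nat.eq_zero_or_pos g with rfl | hg
  · have hsum : ∑ r ∈ Finset.range (s + 1), (-1:ℝ) ^ r * ((0:ℕ).choose r : ℝ) = 1 := by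
      rw [Finset.sum_eq_single 0]
      · simp
      · intro r _ hr
        rcases Nat.exists_eq_succ_of_ne_zero hr with ⟨k, rfl⟩
        simp [Nat.choose_eq_zero_of_lt (Nat.succ_pos k)]
      · intro h
        exact absurd (Finset.mem_range.mpr (by omega)) h
    rw [hsum]
    simp
  · rw [alt_sum g s hg, if_neg (by omega)]
    constructor
    · intro hs
      rw [hs.neg_one_pow, one_mul]
      positivity
    · intro hs
      rw [hs.neg_one_pow, neg_one_mul]
      have : (0:ℝ) ≤ (((g-1).choose s : ℕ) : ℝ) := by positivity
      linarith

lemma Pr_eq (p : ℝ) (n ℓ0 : ℕ) (h : 1 ≤ ℓ0) :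
    Pr p n {x | longestRun x n < ℓ0}
      = Ex p n (fun x => if excCount x n ℓ0 = 0 then (1:ℝ) else 0) := by
  unfold Pr Ex
  apply Finset.sum_congr rfl
  intro x _
  simp only [Set.mem_setOf_eq]
  by_cases hx : excCount (pad x) n ℓ0 = 0
  · rw [if_pos hx, mul_one, if_pos]
    exact (longestRun_lt_iff _ n ℓ0 h).mpr hx
  · rw [if_neg hx, mul_zero, if_neg]
    exact fun hc => hx ((longestRun_lt_iff _ n ℓ0 h).mp hc)

/-- Poisson regime: convergence of binomial moments and of
`P(L(n) < ℓ(n))` when `n p^{ℓ(n)} q → θ`. -/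
theorem stmt13 (p : ℝ) (hp : 0 < p) (hp1 : p < 1) (θ : ℝ) (hθ : 0 < θ)
    (ℓ : ℕ → ℕ) (hℓ : Filter.Tendsto ℓ Filter.atTop Filter.atTop)
    (hlim : Filter.Tendsto (fun n : ℕ => (n : ℝ) * p ^ (ℓ n) * (1 - p))
      Filter.atTop (nhds θ)) :
    (∀ r : ℕ, 1 ≤ r →
      Filter.Tendsto (fun n : ℕ => Ex p n (fun x => ((excCount x n (ℓ n)).choose r : ℝ)))
        Filter.atTop (nhds (θ ^ r / r.factorial))) ∧
    Filter.Tendsto (fun n : ℕ => Pr p n {x | longestRun x n < ℓ n})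
      Filter.atTop (nhds (Real.exp (-θ))) := by
  have hq : 0 < 1 - p := by linarith
  set t : ℕ → ℝ := fun n => p ^ (ℓ n) * (1 - p) with htdef
  have ht0 : ∀ n, 0 < t n := fun n => mul_pos (pow_pos hp _) hq
  have hpow : Filter.Tendsto (fun k : ℕ => p ^ k) Filter.atTop (nhds 0) :=
    tendsto_pow_atTop_nhds_zero_of_lt_one hp.le hp1
  have hpl : Filter.Tendsto (fun n => p ^ (ℓ n)) Filter.atTop (nhds 0) := hpow.comp hℓ
  have ht : Filter.Tendsto t Filter.atTop (nhds 0) := by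
    have := hpl.mul_const (1 - p)
    simpa using this
  have hnt : Filter.Tendsto (fun n : ℕ => (n : ℝ) * t n) Filter.atTop (nhds θ) := by
    apply hlim.congr
    intro n
    exact mul_assoc _ _ _
  have hkt : Filter.Tendsto (fun k : ℕ => (k : ℝ) * (p ^ k * (1 - p))) Filter.atTop (nhds 0) := by
    have := (tendsto_self_mul_const_pow_of_lt_one hp.le hp1).mul_const (1 - p)
    rw [zero_mul] at this
    apply this.congr
    intro k
    ring
  have hℓt : Filter.Tendsto (fun n => (ℓ n : ℝ) * t n) Filter.atTop (nhds 0) := hkt.comp hℓ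
  have hℓ1 : ∀ᶠ n in Filter.atTop, 1 ≤ ℓ n := hℓ.eventually_ge_atTop 1
  have part1 : ∀ r : ℕ, 1 ≤ r →
      Filter.Tendsto (fun n : ℕ => Ex p n (fun x => ((excCount x n (ℓ n)).choose r : ℝ)))
        Filter.atTop (nhds (θ ^ r / r.factorial)) := by
    intro r hr
    have hup1 : Filter.Tendsto (fun n => t n ^ r * ((n.choose r : ℕ) : ℝ)) Filter.atTop
        (nhds (θ ^ r / r.factorial)) := lim_choose hθ ht0 ht hnt r
    have hup2 : Filter.Tendsto
        (fun n => p ^ (ℓ n) * (t n ^ (r - 1) * ((n.choose (r - 1) : ℕ) : ℝ))) Filter.atTop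
        (nhds 0) := by
      have := hpl.mul (lim_choose hθ ht0 ht hnt (r - 1))
      rwa [zero_mul] at this
    have hup2' : Filter.Tendsto
        (fun n => p ^ (ℓ n * r) * (1 - p) ^ (r - 1) * ((n.choose (r - 1) : ℕ) : ℝ)) Filter.atTop
        (nhds 0) := by
      apply hup2.congr
      intro n
      have hexp : ℓ n * r = ℓ n + ℓ n * (r - 1) := by
        conv_lhs => rw [show r = 1 + (r - 1) by omega]
        rw [Nat.mul_add, Nat.mul_one]
      simp only [htdef]
      rw [hexp, pow_add, mul_pow, ← pow_mul]
      ring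
    have hUlim : Filter.Tendsto (fun n => t n ^ r * ((n.choose r : ℕ) : ℝ)
        + p ^ (ℓ n * r) * (1 - p) ^ (r - 1) * ((n.choose (r - 1) : ℕ) : ℝ)) Filter.atTop
        (nhds (θ ^ r / r.factorial)) := by
      have := hup1.add hup2'
      rwa [add_zero] at this
    have hvt : Filter.Tendsto (fun n => (((n + 1 : ℕ) : ℝ) - ((ℓ n * r : ℕ) : ℝ)) * t n)
        Filter.atTop (nhds θ) := by
      have h1 := (hnt.add ht).sub (hℓt.const_mul (r : ℝ))
      rw [add_zero, mul_zero, sub_zero] at h1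
      apply h1.congr
      intro n
      push_cast
      ring
    have hvA : Filter.Tendsto (fun n => ((n + 1 : ℕ) : ℝ) - ((ℓ n * r : ℕ) : ℝ)) Filter.atTop
        Filter.atTop := ratio_atTop hθ ht0 hvt ht
    have hev : ∀ᶠ n in Filter.atTop, ℓ n * r ≤ n + 1 := by
      filter_upwards [hvA.eventually_ge_atTop 0] with n hn
      have : ((ℓ n * r : ℕ) : ℝ) ≤ ((n + 1 : ℕ) : ℝ) := by linarith
      exact_mod_cast this
    have hueq : (fun n => ((n + 1 - ℓ n * r : ℕ) : ℝ) * t n)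
        =ᶠ[Filter.atTop] (fun n => (((n + 1 : ℕ) : ℝ) - ((ℓ n * r : ℕ) : ℝ)) * t n) := by
      filter_upwards [hev] with n hn
      rw [Nat.cast_sub hn]
    have hlow : Filter.Tendsto (fun n => t n ^ r * (((n + 1 - ℓ n * r).choose r : ℕ) : ℝ))
        Filter.atTop (nhds (θ ^ r / r.factorial)) :=
      lim_choose hθ ht0 ht (hvt.congr' (Filter.EventuallyEq.symm hueq)) r
    apply tendsto_of_tendsto_of_tendsto_of_le_of_le' hlow hUlim
    · filter_upwards [hℓ1] with n hn
      exact Ex_lower p hp.le hp1.le n (ℓ n) r hn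
    · filter_upwards [hℓ1] with n hn
      exact Ex_upper p hp.le hp1.le n (ℓ n) r hn hr
  refine ⟨part1, ?_⟩
  set m : ℕ → ℕ → ℝ := fun r n => Ex p n (fun x => ((excCount x n (ℓ n)).choose r : ℝ))
    with hmdef
  have hm : ∀ r, Filter.Tendsto (m r) Filter.atTop (nhds (θ ^ r / r.factorial)) := by
    intro r
    rcases Nat.eq_zero_or_pos r with rfl | hr
    · have : m 0 = fun _ => (1:ℝ) := by
        funext n
        rw [hmdef]
        simp only [Nat.choose_zero_right, Nat.cast_one]
        exact Ex_one
      rw [this]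
      simp only [pow_zero, Nat.factorial_zero, Nat.cast_one, div_one]
      exact tendsto_const_nhds
    · exact part1 r hr
  set F : ℕ → ℕ → ℝ := fun s n => ∑ r ∈ Finset.range (s + 1), (-1:ℝ) ^ r * m r n with hFdef
  set A : ℕ → ℝ := fun s => ∑ r ∈ Finset.range (s + 1), (-1:ℝ) ^ r * (θ ^ r / r.factorial)
    with hAdef
  have hF : ∀ s, Filter.Tendsto (F s) Filter.atTop (nhds (A s)) := by
    intro s
    apply tendsto_finset_sum
    intro r _
    exact (hm r).const_mul _
  have hFEx : ∀ s n, F s n = Ex p n (fun x =>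
      ∑ r ∈ Finset.range (s + 1), (-1:ℝ) ^ r * ((excCount x n (ℓ n)).choose r : ℝ)) := by
    intro s n
    rw [Ex_sum]
    apply Finset.sum_congr rfl
    intro r _
    rw [Ex_const_mul]
  have hPrF : ∀ᶠ n in Filter.atTop, ∀ s : ℕ,
      (Even s → Pr p n {x | longestRun x n < ℓ n} ≤ F s n)
      ∧ (Odd s → F s n ≤ Pr p n {x | longestRun x n < ℓ n}) := by
    filter_upwards [hℓ1] with n hn
    intro s
    rw [Pr_eq p n (ℓ n) hn, hFEx]
    constructor
    · intro hs
      apply Ex_mono hp.le hp1.le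
      intro y
      exact (bonferroni (g := excCount y n (ℓ n)) (s := s)).1 hs
    · intro hs
      apply Ex_mono hp.le hp1.le
      intro y
      exact (bonferroni (g := excCount y n (ℓ n)) (s := s)).2 hs
  have hA : Filter.Tendsto A Filter.atTop (nhds (Real.exp (-θ))) := by
    have h1 := (NormedSpace.expSeries_div_hasSum_exp (-θ)).tendsto_sum_nat
    rw [Real.exp_eq_exp_ℝ]
    have h2 := h1.comp (Filter.tendsto_add_atTop_nat 1)
    apply h2.congr
    intro s
    rw [hAdef]
    simp only [Function.comp_apply]
    apply Finset.sum_congr rfl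
    intro r _
    rw [neg_pow]
    ring
  rw [Metric.tendsto_atTop]
  intro ε hε
  obtain ⟨S, hS⟩ := Metric.tendsto_atTop.mp hA (ε / 2) (by linarith)
  set s0 := 2 * S with hs0
  set s1 := 2 * S + 1 with hs1
  have hS0 : dist (A s0) (Real.exp (-θ)) < ε / 2 := hS s0 (by omega)
  have hS1 : dist (A s1) (Real.exp (-θ)) < ε / 2 := hS s1 (by omega)
  obtain ⟨N0, hN0⟩ := Metric.tendsto_atTop.mp (hF s0) (ε / 2) (by linarith)
  obtain ⟨N1, hN1⟩ := Metric.tendsto_atTop.mp (hF s1) (ε / 2) (by linarith)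
  obtain ⟨N2, hN2⟩ := Filter.eventually_atTop.mp hPrF
  refine ⟨max N0 (max N1 N2), ?_⟩
  intro n hn
  have hn0 : N0 ≤ n := le_trans (le_max_left _ _) hn
  have hn1 : N1 ≤ n := le_trans (le_trans (le_max_left _ _) (le_max_right _ _)) hn
  have hn2 : N2 ≤ n := le_trans (le_trans (le_max_right _ _) (le_max_right _ _)) hn
  have h0 := hN0 n hn0
  have h1 := hN1 n hn1
  have h2 := hN2 n hn2
  have hupper : Pr p n {x | longestRun x n < ℓ n} ≤ F s0 n :=
    (h2 s0).1 (by exact even_two_mul S)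
  have hlower : F s1 n ≤ Pr p n {x | longestRun x n < ℓ n} :=
    (h2 s1).2 (by exact odd_two_mul_add_one S)
  rw [Real.dist_eq] at h0 h1 hS0 hS1 ⊢
  rw [abs_lt] at h0 h1 hS0 hS1
  rw [abs_lt]
  constructor
  · have : Real.exp (-θ) - ε < F s1 n := by linarith
    linarith
  · have : F s0 n < Real.exp (-θ) + ε := by linarith
    linarith
end
end

section
/- Fix 0 < p < 1, q = 1-p, ℓ ≥ 1, and let f(w) = 1 - w + p^ℓ q w^{ℓ+1}. Then f(1/p) = 0, f has exactly two positive real roots w₀ and 1/p (counted with multiplicity, coinciding when p = ℓ/(ℓ+1)), the root w₀ satisfies 1 < w₀, and: if p < ℓ/(ℓ+1) then w₀ < (ℓ+1)/ℓ < 1/(p((ℓ+1)q)^{1/ℓ}) < 1/p; if p > ℓ/(ℓ+1) then 1/p < (ℓ+1)/ℓ < 1/(p((ℓ+1)q)^{1/ℓ}) < w₀; if p = ℓ/(ℓ+1) then w₀ = 1/p = (ℓ+1)/ℓ. -/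
open scoped Classical
open Finset Filter

noncomputable section

private lemma hd (m : ℕ) (x : ℝ) :
    HasDerivAt (fun y : ℝ => y ^ (m+1) * (1 - y)) (((m:ℝ)+1) * x ^ m * (1 - x) - x ^ (m+1)) x := by
  have h1 := (hasDerivAt_pow (m+1) x).mul ((hasDerivAt_const x (1:ℝ)).sub (hasDerivAt_id x))
  change HasDerivAt (fun y : ℝ => y ^ (m+1) * (1 - y)) _ x at h1
  convert h1 using 1
  simp only [Nat.add_sub_cancel, id, Pi.sub_apply]
  push_cast
  ring

private lemma mono_h (ℓ : ℕ) (hℓ : 1 ≤ ℓ) :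
    StrictMonoOn (fun y : ℝ => y ^ ℓ * (1 - y)) (Set.Icc 0 ((ℓ : ℝ)/((ℓ:ℝ)+1))) := by
  obtain ⟨m, rfl⟩ : ∃ m, ℓ = m + 1 := ⟨ℓ - 1, (Nat.succ_pred_eq_of_pos hℓ).symm⟩
  apply strictMonoOn_of_deriv_pos (convex_Icc _ _) (by fun_prop)
  intro x hx
  rw [interior_Icc] at hx
  rw [(hd m x).deriv]
  have hx2 : x * ((m:ℝ) + 1 + 1) < (m:ℝ) + 1 := by
    have := hx.2
    rw [lt_div_iff₀ (by positivity)] at this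
    push_cast at this
    nlinarith
  have hxm : 0 < x ^ m := pow_pos hx.1 m
  nlinarith [pow_succ x m, hxm, hx.1]

private lemma anti_h (ℓ : ℕ) (hℓ : 1 ≤ ℓ) :
    StrictAntiOn (fun y : ℝ => y ^ ℓ * (1 - y)) (Set.Icc ((ℓ : ℝ)/((ℓ:ℝ)+1)) 1) := by
  obtain ⟨m, rfl⟩ : ∃ m, ℓ = m + 1 := ⟨ℓ - 1, (Nat.succ_pred_eq_of_pos hℓ).symm⟩
  apply strictAntiOn_of_deriv_neg (convex_Icc _ _) (by fun_prop)
  intro x hx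
  rw [interior_Icc] at hx
  rw [(hd m x).deriv]
  have hx0 : 0 < x := lt_trans (by positivity) hx.1
  have hx2 : (m:ℝ) + 1 < x * ((m:ℝ) + 1 + 1) := by
    have := hx.1
    rw [div_lt_iff₀ (by positivity)] at this
    push_cast at this
    nlinarith
  have hxm : 0 < x ^ m := pow_pos hx0 m
  nlinarith [pow_succ x m, hxm, hx0]

private lemma key_ineq (p : ℝ) (hp : 0 < p) (hp1 : p < 1) (ℓ : ℕ) (hℓ : 1 ≤ ℓ)
    (hne : p ≠ (ℓ : ℝ)/((ℓ:ℝ)+1)) :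
    p ^ ℓ * (1 - p) < (ℓ:ℝ)^ℓ / ((ℓ:ℝ)+1)^(ℓ+1) := by
  have hℓ0 : (0:ℝ) < (ℓ:ℝ) := by exact_mod_cast hℓ
  have hℓ1 : (0:ℝ) < (ℓ:ℝ)+1 := by linarith
  have hval : ((ℓ:ℝ)/((ℓ:ℝ)+1)) ^ ℓ * (1 - (ℓ:ℝ)/((ℓ:ℝ)+1)) = (ℓ:ℝ)^ℓ / ((ℓ:ℝ)+1)^(ℓ+1) := by
    rw [pow_succ, div_pow]
    field_simp
    ring
  rcases lt_or_gt_of_ne hne with h | h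
  · have := mono_h ℓ hℓ ⟨hp.le, h.le⟩ ⟨by positivity, le_rfl⟩ h
    simpa [hval] using this
  · have hle1 : (ℓ:ℝ)/((ℓ:ℝ)+1) ≤ 1 := by
      rw [div_le_one hℓ1]; linarith
    have := anti_h ℓ hℓ ⟨le_rfl, hle1⟩ ⟨h.le, hp1.le⟩ h
    simpa [hval] using this

set_option maxHeartbeats 2000000 in
/-- real roots of `f(w) = 1 - w + p^ℓ q w^{ℓ+1}` and their location. -/
theorem stmt16 (p : ℝ) (hp : 0 < p) (hp1 : p < 1) (ℓ : ℕ) (hℓ : 1 ≤ ℓ) :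
    (1 - 1 / p + p ^ ℓ * (1 - p) * (1 / p) ^ (ℓ + 1) = 0) ∧
    ∃ w₀ : ℝ, 1 < w₀ ∧ 1 - w₀ + p ^ ℓ * (1 - p) * w₀ ^ (ℓ + 1) = 0 ∧
      (∀ w : ℝ, 0 < w → 1 - w + p ^ ℓ * (1 - p) * w ^ (ℓ + 1) = 0 → w = w₀ ∨ w = 1 / p) ∧
      (p < (ℓ : ℝ) / (ℓ + 1) →
        w₀ < ((ℓ : ℝ) + 1) / ℓ ∧
        ((ℓ : ℝ) + 1) / ℓ < 1 / (p * (((ℓ : ℝ) + 1) * (1 - p)) ^ ((1 : ℝ) / ℓ)) ∧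
        1 / (p * (((ℓ : ℝ) + 1) * (1 - p)) ^ ((1 : ℝ) / ℓ)) < 1 / p) ∧
      (((ℓ : ℝ) / (ℓ + 1) < p) →
        1 / p < ((ℓ : ℝ) + 1) / ℓ ∧
        ((ℓ : ℝ) + 1) / ℓ < 1 / (p * (((ℓ : ℝ) + 1) * (1 - p)) ^ ((1 : ℝ) / ℓ)) ∧
        1 / (p * (((ℓ : ℝ) + 1) * (1 - p)) ^ ((1 : ℝ) / ℓ)) < w₀) ∧
      (p = (ℓ : ℝ) / (ℓ + 1) → w₀ = 1 / p ∧ w₀ = ((ℓ : ℝ) + 1) / ℓ) := by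
  have hp0 : p ≠ 0 := ne_of_gt hp
  have hq : 0 < 1 - p := by linarith
  have hℓ0 : (0:ℝ) < (ℓ:ℝ) := by exact_mod_cast hℓ
  have hℓ1 : (0:ℝ) < (ℓ:ℝ) + 1 := by linarith
  have hpl : (p:ℝ) ^ ℓ ≠ 0 := pow_ne_zero _ hp0
  have hroot : 1 - 1 / p + p ^ ℓ * (1 - p) * (1 / p) ^ (ℓ + 1) = 0 := by
    have h1 : (1/p : ℝ) ^ (ℓ+1) = 1/(p ^ ℓ * p) := by
      rw [div_pow, one_pow, pow_succ]
    rw [h1]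
    field_simp
    ring
  refine ⟨hroot, ?_⟩
  set A : ℝ := p ^ ℓ * (1 - p) with hA
  have hApos : 0 < A := by positivity
  have hXpos : 0 < ((ℓ:ℝ) + 1) * (1 - p) := by positivity
  set r : ℝ := (((ℓ : ℝ) + 1) * (1 - p)) ^ ((1 : ℝ) / ℓ) with hrdef
  have hrpos : 0 < r := Real.rpow_pos_of_pos hXpos _
  have hrpow : r ^ ℓ = ((ℓ:ℝ) + 1) * (1 - p) := by
    rw [hrdef, ← Real.rpow_natCast ((((ℓ:ℝ)+1)*(1-p)) ^ ((1:ℝ)/ℓ)) ℓ,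
      ← Real.rpow_mul hXpos.le, one_div, inv_mul_cancel₀ hℓ0.ne', Real.rpow_one]
  set ws : ℝ := 1 / (p * r) with hws
  have hwspos : 0 < ws := by positivity
  clear_value A r ws
  have hkey1 : A * (((ℓ:ℝ) + 1) * ws ^ ℓ) = 1 := by
    have hwsl : ws ^ ℓ = 1/(p ^ ℓ * (((ℓ:ℝ)+1)*(1-p))) := by
      rw [hws, div_pow, one_pow, mul_pow, hrpow]
    rw [hwsl, hA]
    field_simp
  have hcont : Continuous fun w : ℝ => 1 - w + A * w ^ (ℓ+1) := by fun_prop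
  have hgderiv : ∀ x : ℝ, HasDerivAt (fun w : ℝ => 1 - w + A * w ^ (ℓ+1))
      (A * (((ℓ:ℝ)+1) * x ^ ℓ) - 1) x := by
    intro x
    have h1 := ((hasDerivAt_const x (1:ℝ)).sub (hasDerivAt_id x)).add
      ((hasDerivAt_pow (ℓ+1) x).const_mul A)
    change HasDerivAt (fun w : ℝ => 1 - w + A * w ^ (ℓ+1)) _ x at h1
    convert h1 using 1
    simp only [Nat.add_sub_cancel, id]
    push_cast
    ring
  have hanti : StrictAntiOn (fun w : ℝ => 1 - w + A * w ^ (ℓ+1)) (Set.Icc 0 ws) := by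
    apply strictAntiOn_of_deriv_neg (convex_Icc _ _) hcont.continuousOn
    intro x hx
    rw [interior_Icc] at hx
    rw [(hgderiv x).deriv]
    have hxl : x ^ ℓ < ws ^ ℓ := pow_lt_pow_left₀ hx.2 hx.1.le (by omega)
    nlinarith [hkey1, mul_pos (mul_pos hApos hℓ1) (sub_pos.mpr hxl)]
  have hmono : StrictMonoOn (fun w : ℝ => 1 - w + A * w ^ (ℓ+1)) (Set.Ici ws) := by
    apply strictMonoOn_of_deriv_pos (convex_Ici _) hcont.continuousOn
    intro x hx
    rw [interior_Ici] at hx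
    rw [(hgderiv x).deriv]
    have hxl : ws ^ ℓ < x ^ ℓ := pow_lt_pow_left₀ hx hwspos.le (by omega)
    nlinarith [hkey1, mul_pos (mul_pos hApos hℓ1) (sub_pos.mpr hxl)]
  have hgws : 1 - ws + A * ws ^ (ℓ+1) = 1 - ws * (ℓ:ℝ) / ((ℓ:ℝ)+1) := by
    have h2 : A * ws ^ (ℓ+1) = ws / ((ℓ:ℝ)+1) := by
      rw [pow_succ, ← mul_assoc, eq_div_iff hℓ1.ne']
      linear_combination ws * hkey1
    rw [h2]
    field_simp
    ring
  have h1c : 1 < ((ℓ:ℝ)+1)/ℓ := by rw [lt_div_iff₀ hℓ0]; linarith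
  -- comparisons valid whenever p ≠ ℓ/(ℓ+1)
  have hK2 : p ≠ (ℓ:ℝ)/((ℓ:ℝ)+1) → A * ((ℓ:ℝ)+1) ^ (ℓ+1) < (ℓ:ℝ) ^ ℓ := by
    intro hne
    have hK := key_ineq p hp hp1 ℓ hℓ (by
      intro hcon
      exact hne (by rw [hcon]))
    rw [← hA] at hK
    exact (lt_div_iff₀ (by positivity)).mp hK
  have hcws : p ≠ (ℓ:ℝ)/((ℓ:ℝ)+1) → ((ℓ:ℝ)+1)/ℓ < ws := by
    intro hne
    have hK2' := hK2 hne
    have hprl : (p*r) ^ ℓ < ((ℓ:ℝ)/((ℓ:ℝ)+1)) ^ ℓ := by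
      rw [mul_pow, hrpow, div_pow, lt_div_iff₀ (by positivity)]
      calc p ^ ℓ * (((ℓ:ℝ)+1)*(1-p)) * ((ℓ:ℝ)+1) ^ ℓ = A * ((ℓ:ℝ)+1) ^ (ℓ+1) := by
            rw [hA, pow_succ]; ring
        _ < (ℓ:ℝ) ^ ℓ := hK2'
    have hpr : p * r < (ℓ:ℝ)/((ℓ:ℝ)+1) := by
      by_contra hcon
      push_neg at hcon
      exact absurd hprl (not_lt.mpr (pow_le_pow_left₀ (by positivity) hcon ℓ))
    rw [hws, div_lt_div_iff₀ hℓ0 (by positivity)]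
    rw [lt_div_iff₀ hℓ1] at hpr
    nlinarith
  have hws_lt_invp : p < (ℓ:ℝ)/((ℓ:ℝ)+1) → ws < 1/p := by
    intro h
    have hr1 : 1 < r := by
      rw [hrdef, Real.one_lt_rpow_iff_of_pos hXpos]
      left
      refine ⟨?_, by positivity⟩
      rw [lt_div_iff₀ hℓ1] at h
      nlinarith
    rw [hws, div_lt_div_iff₀ (by positivity) hp]
    nlinarith
  have hinvp_lt_ws : (ℓ:ℝ)/((ℓ:ℝ)+1) < p → 1/p < ws := by
    intro h
    have hr1 : r < 1 := by
      rw [hrdef]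
      apply Real.rpow_lt_one hXpos.le ?_ (by positivity)
      rw [div_lt_iff₀ hℓ1] at h
      nlinarith
    rw [hws, div_lt_div_iff₀ hp (by positivity)]
    nlinarith
  rcases lt_trichotomy p ((ℓ:ℝ)/((ℓ:ℝ)+1)) with h | h | h
  · -- p < ℓ/(ℓ+1)
    have hne : p ≠ (ℓ:ℝ)/((ℓ:ℝ)+1) := ne_of_lt h
    have hK2' := hK2 hne
    have hgc : 1 - ((ℓ:ℝ)+1)/ℓ + A * (((ℓ:ℝ)+1)/ℓ) ^ (ℓ+1) < 0 := by
      have hid : (1 - ((ℓ:ℝ)+1)/ℓ + A * (((ℓ:ℝ)+1)/ℓ) ^ (ℓ+1)) * (ℓ:ℝ) ^ (ℓ+1)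
          = A * ((ℓ:ℝ)+1) ^ (ℓ+1) - (ℓ:ℝ) ^ ℓ := by
        rw [div_pow, pow_succ]
        field_simp
        ring
      by_contra hcon
      push_neg at hcon
      nlinarith [mul_nonneg hcon (pow_pos hℓ0 (ℓ+1)).le]
    obtain ⟨w₀, hw₀mem, hw₀⟩ := intermediate_value_Ioo' (le_of_lt h1c) hcont.continuousOn
      (Set.mem_Ioo.mpr ⟨hgc, by simpa using hApos⟩)
    change 1 - w₀ + A * w₀ ^ (ℓ+1) = 0 at hw₀
    have hcw : ((ℓ:ℝ)+1)/ℓ < ws := hcws hne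
    have hwsinvp : ws < 1/p := hws_lt_invp h
    refine ⟨w₀, hw₀mem.1, hw₀, ?_, ?_, ?_, ?_⟩
    · intro w hwpos hw
      rcases le_total w ws with hle | hle
      · left
        refine hanti.injOn ⟨hwpos.le, hle⟩ ⟨by linarith [hw₀mem.1], by linarith [hw₀mem.2]⟩ ?_
        change 1 - w + A * w ^ (ℓ+1) = 1 - w₀ + A * w₀ ^ (ℓ+1)
        rw [hw, hw₀]
      · right
        refine hmono.injOn (Set.mem_Ici.mpr hle) (Set.mem_Ici.mpr hwsinvp.le) ?_
        change 1 - w + A * w ^ (ℓ+1) = 1 - 1/p + A * (1/p) ^ (ℓ+1)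
        rw [hw, hroot]
    · intro _
      exact ⟨hw₀mem.2, hcw, hwsinvp⟩
    · intro h'
      exact absurd h' (by linarith)
    · intro h'
      exfalso
      rw [h'] at h
      exact lt_irrefl _ h
  · -- p = ℓ/(ℓ+1)
    have hinvp_eq : 1/p = ((ℓ:ℝ)+1)/ℓ := by rw [h, one_div_div]
    have hws_eq : ws = 1/p := by
      have hX1 : ((ℓ:ℝ)+1)*(1-p) = 1 := by
        rw [h]
        field_simp
        ring
      have hr1 : r = 1 := by rw [hrdef, hX1, Real.one_rpow]
      rw [hws, hr1, mul_one]
    refine ⟨1/p, ?_, hroot, ?_, ?_, ?_, fun _ => ⟨rfl, hinvp_eq⟩⟩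
    · rw [hinvp_eq]; exact h1c
    · intro w hwpos hw
      right
      rcases le_total w ws with hle | hle
      · refine hanti.injOn ⟨hwpos.le, hle⟩ ⟨by positivity, hws_eq.ge⟩ ?_
        change 1 - w + A * w ^ (ℓ+1) = 1 - 1/p + A * (1/p) ^ (ℓ+1)
        rw [hw, hroot]
      · refine hmono.injOn (Set.mem_Ici.mpr hle) (Set.mem_Ici.mpr hws_eq.le) ?_
        change 1 - w + A * w ^ (ℓ+1) = 1 - 1/p + A * (1/p) ^ (ℓ+1)
        rw [hw, hroot]
    · intro h'
      exfalso; rw [h] at h'; exact lt_irrefl _ h'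
    · intro h'
      exfalso; rw [h] at h'; exact lt_irrefl _ h'
  · -- ℓ/(ℓ+1) < p
    have hne : p ≠ (ℓ:ℝ)/((ℓ:ℝ)+1) := ne_of_gt h
    have hcw : ((ℓ:ℝ)+1)/ℓ < ws := hcws hne
    have hinvpws : 1/p < ws := hinvp_lt_ws h
    have hgwsneg : 1 - ws + A * ws ^ (ℓ+1) < 0 := by
      rw [hgws]
      have h5 : 1 < ws * (ℓ:ℝ) / ((ℓ:ℝ)+1) := by
        rw [lt_div_iff₀ hℓ1]
        rw [div_lt_iff₀ hℓ0] at hcw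
        nlinarith
      linarith
    set M : ℝ := max (ws+1) (2/A) with hM
    have hM1 : ws < M := lt_of_lt_of_le (lt_add_one ws) (le_max_left _ _)
    have hMge1 : 1 ≤ M := le_trans (by linarith) (le_max_left _ _)
    have hAM : 2 ≤ A * M := by
      have h6 := le_max_right (ws+1) (2/A)
      rw [← hM, div_le_iff₀ hApos] at h6
      linarith
    have hpow : M ^ 2 ≤ M ^ (ℓ+1) := pow_le_pow_right₀ hMge1 (by omega)
    have hgM : 0 < 1 - M + A * M ^ (ℓ+1) := by
      nlinarith [mul_le_mul_of_nonneg_left hpow hApos.le,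
        mul_nonneg (by linarith : (0:ℝ) ≤ A*M - 2) (by linarith : (0:ℝ) ≤ M)]
    obtain ⟨w₀, hw₀mem, hw₀⟩ := intermediate_value_Ioo hM1.le hcont.continuousOn
      (Set.mem_Ioo.mpr ⟨hgwsneg, hgM⟩)
    change 1 - w₀ + A * w₀ ^ (ℓ+1) = 0 at hw₀
    refine ⟨w₀, by linarith [hw₀mem.1], hw₀, ?_, ?_, ?_, ?_⟩
    · intro w hwpos hw
      rcases le_total w ws with hle | hle
      · right
        refine hanti.injOn ⟨hwpos.le, hle⟩ ⟨by positivity, hinvpws.le⟩ ?_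
        change 1 - w + A * w ^ (ℓ+1) = 1 - 1/p + A * (1/p) ^ (ℓ+1)
        rw [hw, hroot]
      · left
        refine hmono.injOn (Set.mem_Ici.mpr hle) (Set.mem_Ici.mpr hw₀mem.1.le) ?_
        change 1 - w + A * w ^ (ℓ+1) = 1 - w₀ + A * w₀ ^ (ℓ+1)
        rw [hw, hw₀]
    · intro h'
      exact absurd h' (by linarith)
    · intro _
      refine ⟨?_, hcw, hw₀mem.1⟩
      rw [div_lt_div_iff₀ hp hℓ0]
      rw [div_lt_iff₀ hℓ1] at h
      nlinarith
    · intro h'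
      exfalso; rw [h'] at h; exact lt_irrefl _ h
end
end
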